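/- Let (X, d, μ) be a metric measure space and B_R(x̄) a ball such that μ(B_r(x)) = ω·r^Q for all x and r (for some constants ω > 0, Q > 0), and such that there exists c_d > 0 with μ(B_R(x̄) ∩ B_r(x)) ≥ c_d·μ(B_r(x)) for all r > 0 and all x ∈ B_R(x̄). Let 0 < ε < 1 and suppose C ⊂ D ⊂ B_R(x̄) are measurable sets with μ(C) < ε·μ(B_R(x̄)), and with the property: for every x ∈ B_R(x̄) and every r ≤ 2R, if μ(C ∩ B_r(x)) ≥ ε·μ(B_r(x)) then B_r(x) ∩ B_R(x̄) ⊂ D. Then μ(C) ≤ ε·(5^Q/c_d)·μ(D). -/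

import Mathlib

open MeasureTheory Metric ENNReal
open Filter Set TopologicalSpace


/-- Any ball in an Ahlfors-regular space is totally bounded. -/
theorem aux_totallyBounded {X : Type*} [MetricSpace X] [MeasurableSpace X] [BorelSpace X]
    (μ : Measure X) (ω Q : ℝ) (hω : 0 < ω)
    (hAhlfors : ∀ (x : X) (r : ℝ), 0 < r → μ (ball x r) = ENNReal.ofReal (ω * r ^ Q))
    (x₀ : X) (r : ℝ) : TotallyBounded (ball x₀ r) := by
  rcases le_or_gt r 0 with hr | hr
  · rw [ball_eq_empty.2 hr]; exact totallyBounded_empty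
  by_contra hnb
  rw [Metric.totallyBounded_iff] at hnb
  push_neg at hnb
  obtain ⟨δ, hδ, hnet⟩ := hnb
  haveI : Std.Symm (α := X) (fun a b => δ ≤ dist a b) := ⟨fun a b h => by rwa [dist_comm]⟩
  obtain ⟨f, hfP, hfd⟩ := exists_seq_of_forall_finset_exists' (fun y => y ∈ ball x₀ r)
    (fun a b => δ ≤ dist a b) (by
      intro s hs
      have := hnet (↑s) s.finite_toSet
      rw [Set.not_subset] at this
      obtain ⟨z, hz, hz2⟩ := this
      refine ⟨z, hz, fun x hx => ?_⟩
      by_contra hlt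
      replace hlt : dist x z < δ := not_le.1 hlt
      exact hz2 (Set.mem_biUnion hx (by rw [mem_ball, dist_comm]; exact hlt)))
  have hdisj : Pairwise (Function.onFun Disjoint fun n => ball (f n) (δ / 2)) := by
    intro m n hmn
    simp only [Function.onFun]
    rw [Set.disjoint_left]
    intro z hzm hzn
    have h1 : dist (f m) z < δ / 2 := by rw [dist_comm]; exact hzm
    have h2 : dist z (f n) < δ / 2 := hzn
    have h3 := dist_triangle (f m) z (f n)
    have h4 := hfd hmn
    linarith
  have hsub : (⋃ n, ball (f n) (δ / 2)) ⊆ ball x₀ (r + δ) := by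
    rintro z hz
    obtain ⟨n, hn⟩ := Set.mem_iUnion.1 hz
    have h1 : dist z (f n) < δ / 2 := hn
    have h2 : dist (f n) x₀ < r := hfP n
    have := dist_triangle z (f n) x₀
    rw [mem_ball]; linarith
  have h1 : μ (⋃ n, ball (f n) (δ / 2)) = ∑' n : ℕ, μ (ball (f n) (δ / 2)) :=
    measure_iUnion hdisj fun n => measurableSet_ball
  have h2 : μ (⋃ n, ball (f n) (δ / 2)) = ⊤ := by
    rw [h1]
    have : ∀ n : ℕ, μ (ball (f n) (δ / 2)) = ENNReal.ofReal (ω * (δ / 2) ^ Q) := fun n =>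
      hAhlfors _ _ (by positivity)
    rw [tsum_congr this, ENNReal.tsum_const_eq_top_of_ne_zero]
    simp only [ne_eq, ENNReal.ofReal_eq_zero, not_le]
    have : (0:ℝ) < (δ / 2) ^ Q := Real.rpow_pos_of_pos (by positivity) _
    positivity
  have h3 : μ (ball x₀ (r + δ)) < ⊤ := by
    rw [hAhlfors _ _ (by positivity)]; exact ENNReal.ofReal_lt_top
  exact absurd (h2 ▸ measure_mono hsub) (by simp [h3.ne])

theorem aux_secondCountable {X : Type*} [MetricSpace X] [MeasurableSpace X] [BorelSpace X]
    (μ : Measure X) (ω Q : ℝ) (hω : 0 < ω)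
    (hAhlfors : ∀ (x : X) (r : ℝ), 0 < r → μ (ball x r) = ENNReal.ofReal (ω * r ^ Q))
    (x₀ : X) : SecondCountableTopology X := by
  have hsep : IsSeparable (Set.univ : Set X) := by
    have hu : (Set.univ : Set X) ⊆ ⋃ n : ℕ, ball x₀ n := by
      intro y _
      obtain ⟨n, hn⟩ := exists_nat_gt (dist y x₀)
      exact Set.mem_iUnion.2 ⟨n, hn⟩
    exact (IsSeparable.iUnion (s := fun n : ℕ => ball x₀ (n:ℝ)) fun n =>
      (aux_totallyBounded μ ω Q hω hAhlfors x₀ n).isSeparable).mono hu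
  haveI : SeparableSpace X := isSeparable_univ_iff.1 hsep
  exact UniformSpace.secondCountable_of_separable X

theorem aux_closedBall {X : Type*} [MetricSpace X] [MeasurableSpace X] [BorelSpace X]
    (μ : Measure X) (ω Q : ℝ) (hω : 0 < ω)
    (hAhlfors : ∀ (x : X) (r : ℝ), 0 < r → μ (ball x r) = ENNReal.ofReal (ω * r ^ Q))
    (x : X) (r : ℝ) (hr : 0 < r) : μ (closedBall x r) = ENNReal.ofReal (ω * r ^ Q) := by
  refine le_antisymm ?_ ?_
  · have hev : ∀ r' ∈ Set.Ioi r, μ (closedBall x r) ≤ ENNReal.ofReal (ω * r' ^ Q) := by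
      intro r' hr'
      rw [← hAhlfors x r' (hr.trans hr')]
      exact measure_mono (closedBall_subset_ball hr')
    have hT : Tendsto (fun r' : ℝ => ENNReal.ofReal (ω * r' ^ Q)) (nhdsWithin r (Set.Ioi r))
        (nhds (ENNReal.ofReal (ω * r ^ Q))) := by
      apply Tendsto.mono_left _ nhdsWithin_le_nhds
      exact (ENNReal.continuous_ofReal.continuousAt.comp
        ((continuousAt_const.mul (Real.continuousAt_rpow_const r Q (Or.inl hr.ne')))))
    exact ge_of_tendsto hT (eventually_nhdsWithin_of_forall hev)
  · rw [← hAhlfors x r hr]; exact measure_mono ball_subset_closedBall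


/-- Lemma 5.3: a "crawling of ink spots"-type lemma in an Ahlfors regular
metric measure space, relative to a `d`-regular ball `B_R(xbar)`. -/
theorem ink_spots {X : Type*} [MetricSpace X] [MeasurableSpace X] [BorelSpace X]
    (μ : Measure X) (ω Q : ℝ) (hω : 0 < ω) (hQ : 0 < Q)
    (hAhlfors : ∀ (x : X) (r : ℝ), 0 < r →
      μ (ball x r) = ENNReal.ofReal (ω * r ^ Q))
    (xbar : X) (R : ℝ) (hRpos : 0 < R) (c_d : ℝ) (hcd : 0 < c_d)
    (hreg : ∀ (x : X), x ∈ ball xbar R → ∀ r : ℝ, 0 < r →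
      ENNReal.ofReal c_d * μ (ball x r) ≤ μ (ball xbar R ∩ ball x r))
    (ε : ℝ) (hε0 : 0 < ε) (hε1 : ε < 1)
    (C D : Set X) (hCmes : MeasurableSet C) (hDmes : MeasurableSet D)
    (hCD : C ⊆ D) (hDB : D ⊆ ball xbar R)
    (hCsmall : μ C < ENNReal.ofReal ε * μ (ball xbar R))
    (hprop : ∀ x ∈ ball xbar R, ∀ r : ℝ, 0 < r → r ≤ 2 * R →
      ENNReal.ofReal ε * μ (ball x r) ≤ μ (C ∩ ball x r) →
      ball x r ∩ ball xbar R ⊆ D) :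
    μ C ≤ ENNReal.ofReal (ε * 5 ^ Q / c_d) * μ D := by
  classical
  have hbtop : ∀ (x : X) (r : ℝ), 0 < r → μ (ball x r) ≠ ⊤ := fun x r hr => by
    rw [hAhlfors x r hr]; exact ENNReal.ofReal_ne_top
  have hcB := aux_closedBall μ ω Q hω hAhlfors
  haveI : SecondCountableTopology X := aux_secondCountable μ ω Q hω hAhlfors xbar
  haveI : IsLocallyFiniteMeasure μ := ⟨fun x => ⟨ball x 1, ball_mem_nhds x one_pos, by
    rw [hAhlfors x 1 one_pos]; exact ENNReal.ofReal_lt_top⟩⟩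
  haveI : IsUnifLocDoublingMeasure μ := by
    refine ⟨⟨(3 ^ Q : ℝ).toNNReal, ?_⟩⟩
    refine Filter.eventually_of_mem self_mem_nhdsWithin fun r hr x => ?_
    have hr0 : (0:ℝ) < r := hr
    have h23 : (2:ℝ) ^ Q ≤ 3 ^ Q := Real.rpow_le_rpow (by norm_num) (by norm_num) hQ.le
    have hrQ : (0:ℝ) ≤ r ^ Q := Real.rpow_nonneg hr0.le Q
    calc μ (closedBall x (2 * r)) = ENNReal.ofReal (ω * (2 * r) ^ Q) :=
          hcB x _ (by positivity)
      _ ≤ ENNReal.ofReal ((3:ℝ) ^ Q * (ω * r ^ Q)) := by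
          apply ENNReal.ofReal_le_ofReal
          rw [Real.mul_rpow (by norm_num : (0:ℝ) ≤ 2) hr0.le]
          nlinarith [mul_le_mul_of_nonneg_left (mul_le_mul_of_nonneg_right h23 hrQ) hω.le]
      _ = ((3 ^ Q : ℝ).toNNReal : ℝ≥0∞) * μ (closedBall x r) := by
          rw [hcB x r hr0, ENNReal.ofReal_mul (by positivity)]
          rfl
  -- density points
  set P : X → Prop := fun x => Tendsto
    (fun r : ℝ => μ (C ∩ closedBall x r) / μ (closedBall x r))
    (nhdsWithin 0 (Set.Ioi 0)) (nhds 1) with hPdef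
  have hae : ∀ᵐ x ∂μ.restrict C, P x := by
    filter_upwards [IsUnifLocDoublingMeasure.ae_tendsto_measure_inter_div μ C 1] with x hx
    exact hx (fun _ => x) id tendsto_id (Filter.eventually_of_mem self_mem_nhdsWithin
      fun r hr => by rw [one_mul]; exact mem_closedBall_self (le_of_lt hr))
  set G : Set X := {x | P x} with hGdef
  have hCG0 : μ (C \ G) = 0 := by
    have h1 : (μ.restrict C) {x | ¬ P x} = 0 := ae_iff.1 hae
    rwa [Measure.restrict_apply' hCmes,
      show {x | ¬ P x} ∩ C = C \ G by ext y; simp only [hGdef, Set.mem_inter_iff,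
        Set.mem_setOf_eq, Set.mem_diff]; tauto] at h1
  -- good radii
  set S : X → Set ℝ := fun x => {s | 0 < s ∧ s ≤ 2 * R ∧
    ENNReal.ofReal ε * μ (ball x s) ≤ μ (C ∩ ball x s)} with hSdef
  have hSne : ∀ x ∈ C ∩ G, (S x).Nonempty := by
    rintro x ⟨hxC, hxG⟩
    have hPx : P x := hxG
    set ε' : ℝ := (1 + ε) / 2 with hε'def
    have hε'0 : 0 < ε' := by rw [hε'def]; linarith
    have hεε' : ε < ε' := by rw [hε'def]; linarith
    have hε'1 : ε' < 1 := by rw [hε'def]; linarith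
    set t0 : ℝ := (ε' / ε) ^ (Q⁻¹) with ht0def
    have ht0 : 1 < t0 := by
      rw [ht0def, Real.one_lt_rpow_iff_of_pos (by positivity)]
      exact Or.inl ⟨by rw [lt_div_iff₀ hε0]; linarith, by positivity⟩
    have ht0pos : 0 < t0 := lt_trans one_pos ht0
    have hev1 : ∀ᶠ r in nhdsWithin 0 (Set.Ioi 0),
        ENNReal.ofReal ε' < μ (C ∩ closedBall x r) / μ (closedBall x r) :=
      Filter.Tendsto.eventually_const_lt (ENNReal.ofReal_lt_one.2 hε'1) hPx
    have hev2 : ∀ᶠ r in nhdsWithin 0 (Set.Ioi 0), r ∈ Set.Ioo (0:ℝ) (2*R/t0) :=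
      Filter.eventually_of_mem (Ioo_mem_nhdsGT_of_mem ⟨le_refl 0, by positivity⟩) fun r hr => hr
    obtain ⟨r, hr1, hr2⟩ := (hev1.and hev2).exists
    have hr0 : 0 < r := hr2.1
    have hcBr : μ (closedBall x r) = ENNReal.ofReal (ω * r ^ Q) := hcB x r hr0
    have hcBne : μ (closedBall x r) ≠ 0 := by
      rw [hcBr]
      simp only [ne_eq, ENNReal.ofReal_eq_zero, not_le]
      have : (0:ℝ) < r ^ Q := Real.rpow_pos_of_pos hr0 _
      positivity
    have hcBnt : μ (closedBall x r) ≠ ⊤ := by rw [hcBr]; exact ENNReal.ofReal_ne_top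
    have hkey : ENNReal.ofReal ε' * μ (closedBall x r) ≤ μ (C ∩ closedBall x r) :=
      (ENNReal.le_div_iff_mul_le (Or.inl hcBne) (Or.inl hcBnt)).1 hr1.le
    refine ⟨t0 * r, by positivity, ?_, ?_⟩
    · have h1 : t0 * r < t0 * (2*R/t0) := mul_lt_mul_of_pos_left hr2.2 ht0pos
      have h2 : t0 * (2*R/t0) = 2*R := by field_simp
      rw [h2] at h1
      exact h1.le
    · have hsQ : (t0 * r) ^ Q = (ε'/ε) * r ^ Q := by
        rw [Real.mul_rpow ht0pos.le hr0.le, ht0def, Real.rpow_inv_rpow (by positivity) hQ.ne']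
      have heq : ε * (ω * (t0*r) ^ Q) = ε' * (ω * r ^ Q) := by
        rw [hsQ]; field_simp
      calc ENNReal.ofReal ε * μ (ball x (t0*r))
          = ENNReal.ofReal (ε * (ω * (t0*r) ^ Q)) := by
            rw [hAhlfors x _ (by positivity), ← ENNReal.ofReal_mul hε0.le]
        _ = ENNReal.ofReal ε' * ENNReal.ofReal (ω * r ^ Q) := by
            rw [heq, ENNReal.ofReal_mul hε'0.le]
        _ ≤ ENNReal.ofReal ε' * μ (closedBall x r) := by rw [hcBr]
        _ ≤ μ (C ∩ closedBall x r) := hkey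
        _ ≤ μ (C ∩ ball x (t0*r)) := measure_mono (Set.inter_subset_inter_right _
            (closedBall_subset_ball (by nlinarith)))
  set rad : X → ℝ := fun x => sSup (S x) with hraddef
  have hbdd : ∀ x, BddAbove (S x) := fun x => ⟨2*R, fun s hs => hs.2.1⟩
  have hgood : ∀ x ∈ C ∩ G, 0 < rad x ∧ rad x ≤ 2*R ∧
      ENNReal.ofReal ε * μ (ball x (rad x)) ≤ μ (C ∩ ball x (rad x)) := by
    intro x hx
    obtain ⟨s₀, hs₀⟩ := hSne x hx
    have hle : s₀ ≤ rad x := le_csSup (hbdd x) hs₀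
    have hpos : 0 < rad x := lt_of_lt_of_le hs₀.1 hle
    have h2R : rad x ≤ 2*R := csSup_le ⟨s₀, hs₀⟩ fun s hs => hs.2.1
    refine ⟨hpos, h2R, ?_⟩
    have hmtop : μ (C ∩ ball x (rad x)) ≠ ⊤ :=
      ne_top_of_le_ne_top (hbtop x _ hpos) (measure_mono Set.inter_subset_right)
    set m : ℝ := (μ (C ∩ ball x (rad x))).toReal with hmdef
    have hm0 : 0 ≤ m := ENNReal.toReal_nonneg
    have hsm : ∀ s ∈ S x, s ^ Q * (ε*ω) ≤ m := by
      intro s hs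
      have h1 : ENNReal.ofReal ε * μ (ball x s) ≤ μ (C ∩ ball x (rad x)) :=
        le_trans hs.2.2 (measure_mono (Set.inter_subset_inter_right _
          (ball_subset_ball (le_csSup (hbdd x) hs))))
      rw [hAhlfors x s hs.1, ← ENNReal.ofReal_mul hε0.le] at h1
      have h2 := (ENNReal.ofReal_le_iff_le_toReal hmtop).1 h1
      calc s ^ Q * (ε*ω) = ε * (ω * s ^ Q) := by ring
        _ ≤ m := h2
    have hK : ∀ s ∈ S x, s ≤ (m / (ε*ω)) ^ (Q⁻¹) := by
      intro s hs
      have h1 : s ^ Q ≤ m / (ε*ω) := by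
        rw [le_div_iff₀ (by positivity)]
        exact hsm s hs
      calc s = (s ^ Q) ^ (Q⁻¹) := (Real.rpow_rpow_inv hs.1.le hQ.ne').symm
        _ ≤ (m / (ε*ω)) ^ (Q⁻¹) :=
          Real.rpow_le_rpow (Real.rpow_nonneg hs.1.le _) h1 (by positivity)
    have h2 : rad x ≤ (m / (ε*ω)) ^ (Q⁻¹) := csSup_le ⟨s₀, hs₀⟩ hK
    have h3 : (rad x) ^ Q ≤ m / (ε*ω) := by
      calc (rad x) ^ Q ≤ ((m/(ε*ω)) ^ (Q⁻¹)) ^ Q := Real.rpow_le_rpow hpos.le h2 hQ.le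
        _ = m/(ε*ω) := Real.rpow_inv_rpow (by positivity) hQ.ne'
    have h4 : (rad x) ^ Q * (ε*ω) ≤ m := (le_div_iff₀ (by positivity)).1 h3
    rw [hAhlfors x _ hpos, ← ENNReal.ofReal_mul hε0.le, ← ENNReal.ofReal_toReal hmtop]
    apply ENNReal.ofReal_le_ofReal
    calc ε * (ω * rad x ^ Q) = rad x ^ Q * (ε * ω) := by ring
      _ ≤ m := h4
  have hmax : ∀ x ∈ C ∩ G, ∀ r' : ℝ, rad x < r' → r' ≤ 2*R →
      μ (C ∩ ball x r') ≤ ENNReal.ofReal (ε * (ω * r' ^ Q)) := by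
    intro x hx r' hr' h2R
    have hr'0 : 0 < r' := lt_trans (hgood x hx).1 hr'
    have hnot : r' ∉ S x := fun hmem => absurd (le_csSup (hbdd x) hmem) (not_le.2 hr')
    have h1 : ¬ (ENNReal.ofReal ε * μ (ball x r') ≤ μ (C ∩ ball x r')) :=
      fun h => hnot ⟨hr'0, h2R, h⟩
    have hlt := not_le.1 h1
    rw [hAhlfors x r' hr'0, ← ENNReal.ofReal_mul hε0.le] at hlt
    exact hlt.le
  have henl : ∀ x ∈ C ∩ G,
      μ (C ∩ closedBall x (5 * rad x)) ≤ ENNReal.ofReal (ε * (ω * (5 * rad x) ^ Q)) := by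
    intro x hx
    have hpos := (hgood x hx).1
    have hρpos : 0 < 5 * rad x := by linarith
    rcases lt_or_ge (5 * rad x) (2*R) with hcase | hcase
    · have hmtop : μ (C ∩ closedBall x (5 * rad x)) ≠ ⊤ :=
        ne_top_of_le_ne_top (by rw [hcB x _ hρpos]; exact ENNReal.ofReal_ne_top)
          (measure_mono Set.inter_subset_right)
      rw [← ENNReal.ofReal_toReal hmtop]
      apply ENNReal.ofReal_le_ofReal
      have hev : ∀ᶠ r' in nhdsWithin (5 * rad x) (Set.Ioi (5 * rad x)),
          (μ (C ∩ closedBall x (5 * rad x))).toReal ≤ ε * (ω * r' ^ Q) := by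
        apply Filter.eventually_of_mem (Ioc_mem_nhdsGT_of_mem ⟨le_refl _, hcase⟩)
        intro r' hr'
        have hr'0 : 0 < r' := lt_trans hρpos hr'.1
        have h1 : μ (C ∩ closedBall x (5 * rad x)) ≤ μ (C ∩ ball x r') :=
          measure_mono (Set.inter_subset_inter_right _ (closedBall_subset_ball hr'.1))
        have h2 := hmax x hx r' (lt_trans (by linarith) hr'.1) hr'.2
        have h3 := le_trans h1 h2
        have hnn : (0:ℝ) ≤ ε * (ω * r' ^ Q) := by
          have : (0:ℝ) < r' ^ Q := Real.rpow_pos_of_pos hr'0 _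
          positivity
        exact ENNReal.toReal_le_of_le_ofReal hnn h3
      have hT : Tendsto (fun r' : ℝ => ε * (ω * r' ^ Q))
          (nhdsWithin (5 * rad x) (Set.Ioi (5 * rad x)))
          (nhds (ε * (ω * (5 * rad x) ^ Q))) :=
        Tendsto.mono_left (continuousAt_const.mul (continuousAt_const.mul
          (Real.continuousAt_rpow_const _ Q (Or.inl hρpos.ne')))) nhdsWithin_le_nhds
      exact ge_of_tendsto hT hev
    · have h1 : μ (C ∩ closedBall x (5 * rad x)) ≤ μ C := measure_mono Set.inter_subset_left
      have h2 : μ C ≤ ENNReal.ofReal (ε * (ω * R ^ Q)) := by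
        rw [ENNReal.ofReal_mul hε0.le, ← hAhlfors xbar R hRpos]
        exact hCsmall.le
      refine le_trans (le_trans h1 h2) (ENNReal.ofReal_le_ofReal ?_)
      have hRρ : R ≤ 5 * rad x := by linarith
      have h4 : R ^ Q ≤ (5 * rad x) ^ Q := Real.rpow_le_rpow hRpos.le hRρ hQ.le
      exact mul_le_mul_of_nonneg_left (mul_le_mul_of_nonneg_left h4 hω.le) hε0.le
  -- Vitali covering
  obtain ⟨u, hu_sub, hu_disj, hu_cov⟩ :=
    Vitali.exists_disjoint_subfamily_covering_enlargement_closedBall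
      (C ∩ G) (fun x => x) rad (2*R) (fun a ha => (hgood a ha).2.1) 5 (by norm_num)
  have huball : ∀ b ∈ u, b ∈ ball xbar R := fun b hb => hDB (hCD (hu_sub hb).1)
  have hucnt : u.Countable := by
    have h2 : ∀ i : ↥u, 0 < μ (closedBall (i:X) (rad i)) := fun i => by
      have hpos := (hgood (i:X) (hu_sub i.2)).1
      calc (0:ℝ≥0∞) < ENNReal.ofReal (ω * (rad (i:X)) ^ Q) := by
            have : (0:ℝ) < (rad (i:X)) ^ Q := Real.rpow_pos_of_pos hpos _
            exact ENNReal.ofReal_pos.2 (by positivity)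
        _ = μ (ball (i:X) (rad i)) := (hAhlfors _ _ hpos).symm
        _ ≤ μ (closedBall (i:X) (rad i)) := measure_mono ball_subset_closedBall
    have h1 : Set.Countable {i : ↥u | 0 < μ (closedBall (i:X) (rad i))} := by
      apply MeasureTheory.Measure.countable_meas_pos_of_disjoint_of_meas_iUnion_ne_top μ
        (As := fun i : ↥u => closedBall (i:X) (rad i))
        (fun i => measurableSet_closedBall)
        (fun i j hij => hu_disj i.2 j.2 (Subtype.coe_injective.ne hij))
      apply ne_top_of_le_ne_top (hbtop xbar (4*R) (by linarith))
      apply measure_mono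
      rintro z hz
      obtain ⟨i, hi⟩ := Set.mem_iUnion.1 hz
      have ha : dist z (i:X) ≤ rad i := hi
      have hb : dist (i:X) xbar < R := huball i i.2
      have hc : rad (i:X) ≤ 2*R := (hgood (i:X) (hu_sub i.2)).2.1
      have hd := dist_triangle z (i:X) xbar
      rw [mem_ball]
      linarith
    rw [show {i : ↥u | 0 < μ (closedBall (i:X) (rad i))} = Set.univ from Set.eq_univ_of_forall h2] at h1
    haveI : Countable ↥u := Set.countable_univ_iff.1 h1
    exact Set.countable_coe_iff.1 this
  -- covering of C
  have hCsub : C ∩ G ⊆ ⋃ b ∈ u, (C ∩ closedBall b (5 * rad b)) := by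
    intro a ha
    obtain ⟨b, hb, hsub⟩ := hu_cov a ha
    exact Set.mem_biUnion hb ⟨ha.1, hsub (mem_closedBall_self (hgood a ha).1.le)⟩
  have h5 : μ C ≤ μ (C ∩ G) := by
    calc μ C ≤ μ (C ∩ G) + μ (C \ G) := measure_le_inter_add_diff μ C G
      _ = μ (C ∩ G) := by rw [hCG0, add_zero]
  have h6 : μ (C ∩ G) ≤ ∑' (b : ↥u), μ (C ∩ closedBall (b:X) (5 * rad b)) :=
    le_trans (measure_mono hCsub) (measure_biUnion_le μ hucnt _)
  have hcdne : ENNReal.ofReal c_d ≠ 0 := (ENNReal.ofReal_pos.2 hcd).ne'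
  have hcdnt : ENNReal.ofReal c_d ≠ ⊤ := ENNReal.ofReal_ne_top
  have hterm : ∀ b : ↥u, μ (C ∩ closedBall (b:X) (5 * rad b)) ≤
      ENNReal.ofReal (ε * 5 ^ Q / c_d) * μ (ball xbar R ∩ ball (b:X) (rad b)) := by
    intro b
    have hb := hu_sub b.2
    have hradb := (hgood (b:X) hb).1
    have h5Q : (0:ℝ) < (5:ℝ) ^ Q := Real.rpow_pos_of_pos (by norm_num) _
    calc μ (C ∩ closedBall (b:X) (5 * rad b))
        ≤ ENNReal.ofReal (ε * (ω * (5 * rad (b:X)) ^ Q)) := henl (b:X) hb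
      _ = ENNReal.ofReal (ε * 5 ^ Q) * μ (ball (b:X) (rad b)) := by
          rw [hAhlfors _ _ hradb, ← ENNReal.ofReal_mul (by positivity)]
          congr 1
          rw [Real.mul_rpow (by norm_num) hradb.le]
          ring
      _ ≤ ENNReal.ofReal (ε * 5 ^ Q) *
          ((ENNReal.ofReal c_d)⁻¹ * μ (ball xbar R ∩ ball (b:X) (rad b))) := by
          apply mul_le_mul_right
          have hr := hreg (b:X) (huball (b:X) b.2) (rad b) hradb
          have h7 : μ (ball (b:X) (rad b)) ≤
              μ (ball xbar R ∩ ball (b:X) (rad b)) / ENNReal.ofReal c_d :=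
            (ENNReal.le_div_iff_mul_le (Or.inl hcdne) (Or.inl hcdnt)).2
              (by rw [mul_comm]; exact hr)
          rwa [ENNReal.div_eq_inv_mul] at h7
      _ = ENNReal.ofReal (ε * 5 ^ Q / c_d) * μ (ball xbar R ∩ ball (b:X) (rad b)) := by
          rw [← mul_assoc]
          congr 1
          rw [ENNReal.ofReal_div_of_pos hcd, div_eq_mul_inv]
  have hsum : ∑' (b : ↥u), μ (C ∩ closedBall (b:X) (5 * rad b)) ≤
      ENNReal.ofReal (ε * 5 ^ Q / c_d) *
        ∑' (b : ↥u), μ (ball xbar R ∩ ball (b:X) (rad b)) := by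
    rw [← ENNReal.tsum_mul_left]
    exact ENNReal.tsum_le_tsum hterm
  have hdisjE : Pairwise (Function.onFun Disjoint fun b : ↥u => ball xbar R ∩ ball (b:X) (rad b)) := by
    intro i j hij
    exact (hu_disj i.2 j.2 (Subtype.coe_injective.ne hij)).mono
      (Set.inter_subset_right.trans ball_subset_closedBall)
      (Set.inter_subset_right.trans ball_subset_closedBall)
  have hUD : (⋃ b : ↥u, ball xbar R ∩ ball (b:X) (rad b)) ⊆ D := by
    rintro z hz
    obtain ⟨b, hb⟩ := Set.mem_iUnion.1 hz
    have hgb := hgood (b:X) (hu_sub b.2)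
    exact hprop (b:X) (huball (b:X) b.2) (rad b) hgb.1 hgb.2.1 hgb.2.2 ⟨hb.2, hb.1⟩
  have h8 : ∑' (b : ↥u), μ (ball xbar R ∩ ball (b:X) (rad b)) ≤ μ D :=
    le_trans (tsum_meas_le_meas_iUnion_of_disjoint μ
      (fun b => measurableSet_ball.inter measurableSet_ball) hdisjE)
      (measure_mono hUD)
  calc μ C ≤ μ (C ∩ G) := h5
    _ ≤ ∑' (b : ↥u), μ (C ∩ closedBall (b:X) (5 * rad b)) := h6
    _ ≤ ENNReal.ofReal (ε * 5 ^ Q / c_d) *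
        ∑' (b : ↥u), μ (ball xbar R ∩ ball (b:X) (rad b)) := hsum
    _ ≤ ENNReal.ofReal (ε * 5 ^ Q / c_d) * μ D := mul_le_mul_right h8 _
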